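/- Let z : 2^I → R be a submodular function with z(∅) = 0, let (T_1,…,T_k) be a composition of I, and let ∅ = C_0 ⊂ C_1 ⊂ … ⊂ C_n = I (n = |I|) be a maximal chain in the Boolean lattice 2^I containing the sets T_1, T_1 ∪ T_2, …, T_1 ∪ … ∪ T_k. Define the greedy point x̃ ∈ R^I by x̃_{i_j} = z(C_j) - z(C_{j-1}), where i_j is the unique element of C_j \ C_{j-1}. Then: (i) x̃(C_j) = z(C_j) for all j and x̃ lies in the base polytope P(z); and (ii) for every direction y in the braid cone B_{T_1,…,T_k}, the point x̃ maximizes y over P(z), i.e., y(x̃) ≥ y(x) for all x ∈ P(z). -/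
import Mathlib


open Set

noncomputable section

/-- The pairing of a direction `y` with a point `x`: `y(x) = ∑ i, y i * x i`. -/
def evalDir {I : Type*} [Fintype I] (y x : I → ℝ) : ℝ := ∑ i, y i * x i

/-- A submodular set function. -/
def Submodular {I : Type*} [DecidableEq I] (z : Finset I → ℝ) : Prop :=
  ∀ A B : Finset I, z (A ∪ B) + z (A ∩ B) ≤ z A + z B

/-- The base polytope of a set function `z`. -/
def basePolytope {I : Type*} [Fintype I] (z : Finset I → ℝ) : Set (I → ℝ) :=
  {x | ∑ i, x i = z Finset.univ ∧ ∀ T : Finset I, ∑ i ∈ T, x i ≤ z T}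

/-- An (ordered set) composition of the finite index type `I`: a list of pairwise disjoint
nonempty subsets whose union is all of `I`. -/
def IsSetComposition {I : Type*} [Fintype I] [DecidableEq I] (L : List (Finset I)) : Prop :=
  (∀ T ∈ L, T.Nonempty) ∧ L.Pairwise (fun S T => Disjoint S T) ∧
    L.foldr (· ∪ ·) ∅ = Finset.univ

/-- The braid cone `B_{T_1,…,T_k}` of a composition `(T_1,…,T_k)`. -/
def braidConeOfComp {I : Type*} [Fintype I] [DecidableEq I] (L : List (Finset I)) :
    Set (I → ℝ) :=
  {y | ∀ (a b : ℕ) (ha : a < L.length) (hb : b < L.length), a ≤ b →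
    ∀ i ∈ L.get ⟨a, ha⟩, ∀ j ∈ L.get ⟨b, hb⟩, y j ≤ y i}

/-- The union `T_1 ∪ … ∪ T_a` of the first `a` blocks of a composition. -/
def prefixUnion {I : Type*} [Fintype I] [DecidableEq I] (L : List (Finset I)) (a : ℕ) :
    Finset I :=
  (L.take a).foldr (· ∪ ·) ∅


private lemma mem_foldrUnion {I : Type*} [DecidableEq I] (l : List (Finset I)) (i : I) :
    i ∈ l.foldr (· ∪ ·) ∅ ↔ ∃ T ∈ l, i ∈ T := by
  induction l with
  | nil => simp
  | cons T l ih => simp [ih]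

private lemma mem_prefixUnion {I : Type*} [Fintype I] [DecidableEq I] :
    ∀ (L : List (Finset I)) (a : ℕ) (i : I),
    i ∈ prefixUnion L a ↔ ∃ b, ∃ _ : b < L.length, b < a ∧ i ∈ L[b] := by
  intro L
  induction L with
  | nil => intro a i; simp [prefixUnion]
  | cons T L ih =>
    intro a i
    cases a with
    | zero => simp [prefixUnion]
    | succ a =>
      have : prefixUnion (T :: L) (a + 1) = T ∪ prefixUnion L a := by
        simp [prefixUnion]
      rw [this]
      simp only [Finset.mem_union, ih a i]
      constructor
      · rintro (h | ⟨b, hb, hba, hmem⟩)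
        · exact ⟨0, by simp, by omega, h⟩
        · exact ⟨b + 1, by simpa using Nat.succ_lt_succ hb, by omega, by simpa using hmem⟩
      · rintro ⟨b, hb, hba, hmem⟩
        cases b with
        | zero => exact Or.inl (by simpa using hmem)
        | succ b =>
          right
          exact ⟨b, by simpa using hb, by omega, by simpa using hmem⟩

/-- Let `z` be a submodular function with `z(∅) = 0`, `(T_1,…,T_k)` a
composition of `I`, and `∅ = C_0 ⊂ C_1 ⊂ … ⊂ C_n = I` a maximal chain in the Boolean
lattice containing the prefix unions `T_1, T_1 ∪ T_2, …, T_1 ∪ … ∪ T_k`. Let `x̃` be the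
greedy point, `x̃_{i_j} = z(C_j) - z(C_{j-1})` where `i_j` is the unique element of
`C_j \ C_{j-1}`.  Then (i) `x̃(C_j) = z(C_j)` for all `j` and `x̃ ∈ P(z)`, and (ii) for
every direction `y` in the braid cone `B_{T_1,…,T_k}`, the point `x̃` maximizes `y` over
the base polytope `P(z)`. -/
theorem stmt16 {I : Type*} [Fintype I] [DecidableEq I]
    (z : Finset I → ℝ) (hsub : Submodular z) (hz0 : z ∅ = 0)
    (L : List (Finset I)) (hL : IsSetComposition L)
    (n : ℕ) (hn : n = Fintype.card I)
    (C : ℕ → Finset I) (hC0 : C 0 = ∅) (hCn : C n = Finset.univ)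
    (hchain : ∀ j < n, C j ⊆ C (j + 1) ∧ (C (j + 1) \ C j).card = 1)
    (hcontain : ∀ a ≤ L.length, ∃ j ≤ n, prefixUnion L a = C j)
    (xt : I → ℝ)
    (hxt : ∀ j < n, ∀ i ∈ C (j + 1) \ C j, xt i = z (C (j + 1)) - z (C j)) :
    ((∀ j ≤ n, ∑ i ∈ C j, xt i = z (C j)) ∧ xt ∈ basePolytope z) ∧
    (∀ y ∈ braidConeOfComp L, ∀ x ∈ basePolytope z, evalDir y x ≤ evalDir y xt) := by
  obtain ⟨hne, hdisj, hunion⟩ := hL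
  -- chain is monotone
  have hmono : ∀ j' ≤ n, ∀ j ≤ j', C j ⊆ C j' := by
    intro j'
    induction j' with
    | zero => intro _ j hj; interval_cases j; exact subset_rfl
    | succ j' ihj =>
      intro hj'n j hj
      rcases Nat.eq_or_lt_of_le hj with rfl | hlt
      · exact subset_rfl
      · exact (ihj (by omega) j (by omega)).trans (hchain j' (by omega)).1
  -- each step adds exactly one element
  have hstep : ∀ j < n, ∃ i, i ∉ C j ∧ C (j + 1) = insert i (C j) ∧
      C (j + 1) \ C j = {i} := by
    intro j hj
    obtain ⟨hsub', hcard⟩ := hchain j hj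
    obtain ⟨i, hi⟩ := Finset.card_eq_one.mp hcard
    have hi1 : i ∈ C (j + 1) \ C j := by rw [hi]; exact Finset.mem_singleton_self i
    refine ⟨i, (Finset.mem_sdiff.mp hi1).2, ?_, hi⟩
    have := Finset.union_sdiff_of_subset hsub'
    rw [hi] at this
    rw [← this]
    ext a; simp [or_comm]
  -- part (i)(a)
  have hsum : ∀ j ≤ n, ∑ i ∈ C j, xt i = z (C j) := by
    intro j
    induction j with
    | zero => intro _; simp [hC0, hz0]
    | succ j ihj =>
      intro hjn
      obtain ⟨i, hiC, hins, hdiff⟩ := hstep j (by omega)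
      have hxti : xt i = z (C (j + 1)) - z (C j) := by
        apply hxt j (by omega); rw [hdiff]; exact Finset.mem_singleton_self i
      rw [hins, Finset.sum_insert hiC, ihj (by omega), hxti, ← hins]
      ring
  -- part (i)(b): the inequalities
  have hineq : ∀ j ≤ n, ∀ T : Finset I, ∑ i ∈ T ∩ C j, xt i ≤ z (T ∩ C j) := by
    intro j
    induction j with
    | zero => intro _ T; simp [hC0, hz0]
    | succ j ihj =>
      intro hjn T
      obtain ⟨i, hiC, hins, hdiff⟩ := hstep j (by omega)
      by_cases hiT : i ∈ T
      · have hTins : T ∩ C (j + 1) = insert i (T ∩ C j) := by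
          rw [hins, Finset.inter_comm, Finset.insert_inter_of_mem hiT, Finset.inter_comm]
        have hiTC : i ∉ T ∩ C j := by simp [hiC]
        have hxti : xt i = z (C (j + 1)) - z (C j) := by
          apply hxt j (by omega); rw [hdiff]; exact Finset.mem_singleton_self i
        have hsubm := hsub (C j) (T ∩ C (j + 1))
        have h1 : C j ∪ (T ∩ C (j + 1)) = C (j + 1) := by
          rw [hTins, Finset.union_insert, Finset.union_eq_left.mpr Finset.inter_subset_right,
            hins]
        have h2 : C j ∩ (T ∩ C (j + 1)) = T ∩ C j := by
          rw [hTins, Finset.inter_insert_of_notMem hiC,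
            Finset.inter_eq_right.mpr Finset.inter_subset_right]
        rw [h1, h2, hTins] at hsubm
        have hih := ihj (by omega) T
        rw [hTins, Finset.sum_insert hiTC, hxti]
        linarith
      · have hTeq : T ∩ C (j + 1) = T ∩ C j := by
          rw [hins, Finset.inter_comm, Finset.insert_inter_of_notMem hiT, Finset.inter_comm]
        rw [hTeq]; exact ihj (by omega) T
  have hxtP : xt ∈ basePolytope z := by
    refine ⟨?_, ?_⟩
    · have := hsum n le_rfl
      rw [hCn] at this
      simpa using this
    · intro T
      have := hineq n le_rfl T
      rw [hCn, Finset.inter_univ] at this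
      exact this
  refine ⟨⟨hsum, hxtP⟩, ?_⟩
  -- part (ii)
  intro y hy x hx
  -- block index of each element
  have hblock : ∀ i : I, ∃ a, ∃ _ : a < L.length, i ∈ L[a] := by
    intro i
    have : i ∈ L.foldr (· ∪ ·) ∅ := by rw [hunion]; exact Finset.mem_univ i
    obtain ⟨T, hT, hiT⟩ := (mem_foldrUnion L i).mp this
    obtain ⟨a, ha, rfl⟩ := List.mem_iff_getElem.mp hT
    exact ⟨a, ha, hiT⟩
  have hdisj' : ∀ (a b : ℕ) (ha : a < L.length) (hb : b < L.length) (i : I),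
      i ∈ L[a] → i ∈ L[b] → a = b := by
    intro a b ha hb i hia hib
    by_contra hab
    rcases Nat.lt_or_ge a b with h | h
    · exact (List.pairwise_iff_getElem.mp hdisj a b ha hb h).forall_ne_finset hia hib rfl
    · have h' : b < a := by omega
      exact (List.pairwise_iff_getElem.mp hdisj b a hb ha h').forall_ne_finset hib hia rfl
  -- y is monotone along the chain
  have monoY : ∀ j j', j ≤ j' → j' < n → ∀ i ∈ C (j + 1) \ C j,
      ∀ i' ∈ C (j' + 1) \ C j', y i' ≤ y i := by
    intro j j' hjj' hj'n i hi i' hi'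
    obtain ⟨hiC1, hiC0⟩ := Finset.mem_sdiff.mp hi
    obtain ⟨hi'C1, hi'C0⟩ := Finset.mem_sdiff.mp hi'
    obtain ⟨a, ha, hia⟩ := hblock i
    obtain ⟨b, hb, hib⟩ := hblock i'
    -- i ∉ prefixUnion L a
    have hnotpre : i ∉ prefixUnion L a := by
      intro hmem
      obtain ⟨c, hc, hca, hic⟩ := (mem_prefixUnion L a i).mp hmem
      have := hdisj' c a hc ha i hic hia
      omega
    -- prefixUnion L a = C m with m ≤ j
    obtain ⟨m, hmn, hmC⟩ := hcontain a (le_of_lt ha)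
    have hmj : m ≤ j := by
      by_contra hmj
      have : C (j + 1) ⊆ C m := hmono m hmn (j + 1) (by omega)
      exact hnotpre (hmC ▸ this hiC1)
    -- block order: a ≤ b
    have hab : a ≤ b := by
      by_contra hab
      have hba : b + 1 ≤ a := by omega
      have h1 : i' ∈ prefixUnion L (b + 1) :=
        (mem_prefixUnion L (b + 1) i').mpr ⟨b, hb, by omega, hib⟩
      have h2 : prefixUnion L (b + 1) ⊆ prefixUnion L a := by
        intro u hu
        obtain ⟨c, hc, hcb, huc⟩ := (mem_prefixUnion L (b + 1) u).mp hu
        exact (mem_prefixUnion L a u).mpr ⟨c, hc, by omega, huc⟩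
      have : i' ∈ C j' := hmono j' (by omega) m (by omega) (hmC ▸ h2 h1)
      exact hi'C0 this
    simpa using hy a b ha hb hab i (by simpa using hia) i' (by simpa using hib)
  -- nonnegativity of partial gaps
  have hS : ∀ j ≤ n, 0 ≤ ∑ i ∈ C j, (xt i - x i) := by
    intro j hj
    rw [Finset.sum_sub_distrib, hsum j hj]
    have := hx.2 (C j)
    linarith
  have hSn : ∑ i ∈ C n, (xt i - x i) = 0 := by
    rw [Finset.sum_sub_distrib, hsum n le_rfl, hCn]
    have h := hx.1
    linarith
  -- main Abel-type induction
  have main : ∀ j < n, ∀ i ∈ C (j + 1) \ C j,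
      y i * (∑ i' ∈ C (j + 1), (xt i' - x i')) ≤ ∑ i' ∈ C (j + 1), y i' * (xt i' - x i') := by
    intro j
    induction j with
    | zero =>
      intro h0 i hi
      obtain ⟨i0, hi0C, hins, hdiff⟩ := hstep 0 h0
      have : i = i0 := by
        have := hdiff ▸ hi
        simpa using this
      subst this
      rw [hins, hC0]
      simp [Finset.mul_sum]
    | succ j ihj =>
      intro hjn i hi
      obtain ⟨i2, hi2C, hins2, hdiff2⟩ := hstep (j + 1) (by omega)
      have hii2 : i = i2 := by
        have := hdiff2 ▸ hi
        simpa using this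
      subst hii2
      obtain ⟨i1, hi1C, hins1, hdiff1⟩ := hstep j (by omega)
      have hi1mem : i1 ∈ C (j + 1) \ C j := by rw [hdiff1]; simp
      have hIH := ihj (by omega) i1 hi1mem
      have hyy : y i ≤ y i1 := monoY j (j + 1) (by omega) (by omega) i1 hi1mem i hi
      have hSpos : 0 ≤ ∑ i' ∈ C (j + 1), (xt i' - x i') := hS (j + 1) (by omega)
      rw [hins2, Finset.sum_insert hi2C, Finset.sum_insert hi2C]
      nlinarith [mul_nonneg (sub_nonneg.mpr hyy) hSpos]
  -- conclude
  have key : 0 ≤ ∑ i, y i * (xt i - x i) := by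
    rcases Nat.eq_zero_or_pos n with hn0 | hn0
    · have huniv : (Finset.univ : Finset I) = ∅ := by rw [← hCn, hn0, hC0]
      rw [huniv]; simp
    · obtain ⟨m, rfl⟩ : ∃ m, n = m + 1 := ⟨n - 1, by omega⟩
      obtain ⟨i0, hi0C, hins, hdiff⟩ := hstep m (by omega)
      have hi0mem : i0 ∈ C (m + 1) \ C m := by rw [hdiff]; simp
      have := main m (by omega) i0 hi0mem
      rw [hSn] at this
      rw [← hCn]
      linarith
  have expand : ∑ i, y i * (xt i - x i) = evalDir y xt - evalDir y x := by
    unfold evalDir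
    rw [← Finset.sum_sub_distrib]
    congr 1; ext i; ring
  linarith [expand ▸ key]
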